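/- For a composition α ∈ ℕⁿ, the alternant a_α = det(X_i^{α_j})_{i,j<n} is zero if α is fixed by some transposition (i.e., has a repeated entry), and otherwise a_α = sign(σ)·a_{α⁺·ordered} where σ sorts α into strictly decreasing order; consequently the polynomials a_{λ+δ} for partitions λ with at most n parts, where δ = (n−1, n−2, …, 1, 0), form a ℤ-basis of the group of alternating polynomials in n variables. -/

import Mathlib

/-- `p` is an alternating polynomial. -/
def IsAlternatingPoly (n : ℕ) (p : MvPolynomial (Fin n) ℤ) : Prop :=
  ∀ σ : Equiv.Perm (Fin n),
    MvPolynomial.rename σ p = (Equiv.Perm.sign σ : ℤ) • p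

/-- The alternant `a_α = det(X_i^{α_j})_{i,j<n}`. -/
noncomputable def alternant (n : ℕ) (α : Fin n → ℕ) : MvPolynomial (Fin n) ℤ :=
  Matrix.det (Matrix.of fun i j : Fin n =>
    (MvPolynomial.X i : MvPolynomial (Fin n) ℤ) ^ α j)

namespace AltAux

open MvPolynomial Equiv Finset

variable {n : ℕ}

noncomputable def Mon (g : Fin n → ℕ) : Fin n →₀ ℕ := Finsupp.equivFunOnFinite.symm g

lemma Mon_injective : Function.Injective (Mon (n := n)) :=
  Finsupp.equivFunOnFinite.symm.injective

lemma coe_Mon (g : Fin n → ℕ) : ⇑(Mon g) = g := rfl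

lemma Mon_coe (d : Fin n →₀ ℕ) : Mon ⇑d = d :=
  Finsupp.equivFunOnFinite.symm_apply_apply d

lemma prod_X_pow (g : Fin n → ℕ) :
    (∏ i, (MvPolynomial.X i : MvPolynomial (Fin n) ℤ) ^ g i) = monomial (Mon g) 1 := by
  rw [← prod_X_pow_eq_monomial]
  refine (Finset.prod_subset (Finset.subset_univ _) fun x _ hx => ?_).symm
  have : g x = 0 := Finsupp.notMem_support_iff.mp hx
  simp [this]

lemma alternant_eq_sum (α : Fin n → ℕ) :
    alternant n α = ∑ σ : Perm (Fin n),
      (Perm.sign σ : ℤ) • (monomial (Mon (α ∘ σ)) 1 : MvPolynomial (Fin n) ℤ) := by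
  rw [alternant, Matrix.det_apply, ← Equiv.sum_comp (Equiv.inv (Perm (Fin n)))]
  refine Finset.sum_congr rfl fun σ _ => ?_
  simp only [Equiv.inv_apply]
  rw [Equiv.Perm.sign_inv]
  congr 1
  have h1 : ∏ i, Matrix.of (fun i j : Fin n =>
      (MvPolynomial.X i : MvPolynomial (Fin n) ℤ) ^ α j) (σ⁻¹ i) i
      = ∏ i, (MvPolynomial.X (σ⁻¹ i) : MvPolynomial (Fin n) ℤ) ^ α i := rfl
  have h2 := Equiv.prod_comp σ
    (fun i => (MvPolynomial.X (σ⁻¹ i) : MvPolynomial (Fin n) ℤ) ^ α i)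
  simp only [← Equiv.Perm.mul_apply, inv_mul_cancel, Equiv.Perm.one_apply] at h2
  rw [h1, ← h2]
  exact prod_X_pow (α ∘ σ)

lemma coeff_alternant (α : Fin n → ℕ) (d : Fin n →₀ ℕ) :
    coeff d (alternant n α)
      = ∑ σ : Perm (Fin n), if Mon (α ∘ σ) = d then (Perm.sign σ : ℤ) else 0 := by
  rw [alternant_eq_sum, coeff_sum]
  refine Finset.sum_congr rfl fun σ _ => ?_
  rw [coeff_smul, coeff_monomial]
  simp only [smul_eq_mul, mul_ite, mul_one, mul_zero]

lemma coeff_alternant_of_ne (α : Fin n → ℕ) (d : Fin n →₀ ℕ)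
    (h : ∀ σ : Perm (Fin n), α ∘ σ ≠ ⇑d) : coeff d (alternant n α) = 0 := by
  rw [coeff_alternant]
  refine Finset.sum_eq_zero fun σ _ => if_neg fun hc => h σ ?_
  rw [← coe_Mon (α ∘ σ), hc]

lemma coeff_alternant_of_eq (α : Fin n → ℕ) (hα : Function.Injective α)
    (σ : Perm (Fin n)) :
    coeff (Mon (α ∘ σ)) (alternant n α) = (Perm.sign σ : ℤ) := by
  rw [coeff_alternant]
  rw [Finset.sum_eq_single σ]
  · exact if_pos rfl
  · intro τ _ hτ
    refine if_neg fun hc => hτ ?_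
    have h2 : α ∘ τ = α ∘ σ := Mon_injective hc
    exact Equiv.ext fun i => hα (congrFun h2 i)
  · simp

lemma alt_coeff {p : MvPolynomial (Fin n) ℤ} (hp : IsAlternatingPoly n p)
    (g : Fin n → ℕ) (σ : Perm (Fin n)) :
    coeff (Mon (g ∘ σ)) p = (Perm.sign σ : ℤ) * coeff (Mon g) p := by
  have hmap : Finsupp.mapDomain (⇑(σ⁻¹ : Perm (Fin n))) (Mon g) = Mon (g ∘ σ) := by
    rw [← Finsupp.equivMapDomain_eq_mapDomain]
    ext i
    simp [Mon, Finsupp.equivMapDomain, Equiv.Perm.inv_def]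
  have h1 := coeff_rename_mapDomain (⇑(σ⁻¹ : Perm (Fin n)))
    (σ⁻¹ : Perm (Fin n)).injective p (Mon g)
  rw [hmap, hp σ⁻¹, coeff_smul, smul_eq_mul, Equiv.Perm.sign_inv] at h1
  have h2 : ((Perm.sign σ : ℤˣ) : ℤ) * ((Perm.sign σ : ℤˣ) : ℤ) = 1 := by
    rw [← Units.val_mul, Int.units_mul_self, Units.val_one]
  calc coeff (Mon (g ∘ σ)) p
      = ((Perm.sign σ : ℤˣ) : ℤ) * (((Perm.sign σ : ℤˣ) : ℤ) * coeff (Mon (g ∘ σ)) p) := by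
        rw [← mul_assoc, h2, one_mul]
    _ = (Perm.sign σ : ℤ) * coeff (Mon g) p := by rw [h1]

lemma coeff_zero_of_not_injective {p : MvPolynomial (Fin n) ℤ}
    (hp : IsAlternatingPoly n p) (g : Fin n → ℕ) (hg : ¬ Function.Injective g) :
    coeff (Mon g) p = 0 := by
  simp only [Function.Injective, not_forall] at hg
  obtain ⟨a, b, hab, hne⟩ := hg
  have hswap : g ∘ (Equiv.swap a b) = g := by
    funext i
    rcases eq_or_ne i a with rfl | hia
    · simp [Equiv.swap_apply_left, hab]
    rcases eq_or_ne i b with rfl | hib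
    · simp [Equiv.swap_apply_right, hab]
    · simp [Equiv.swap_apply_of_ne_of_ne hia hib]
  have h := alt_coeff hp g (Equiv.swap a b)
  rw [hswap, Equiv.Perm.sign_swap hne] at h
  simp only [Units.val_neg, Units.val_one] at h
  omega

lemma rev_strictAnti : StrictAnti (Fin.rev : Fin n → Fin n) :=
  fun _ _ h => Fin.rev_lt_rev.mpr h

lemma exists_sort {m : Fin n → ℕ} (hm : Function.Injective m) :
    ∃ τ : Perm (Fin n), StrictAnti (m ∘ τ) := by
  refine ⟨(Fin.revPerm).trans (Tuple.sort m), ?_⟩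
  have h2 : StrictMono (m ∘ Tuple.sort m) :=
    (Tuple.monotone_sort m).strictMono_of_injective (hm.comp (Tuple.sort m).injective)
  have hcoe : (m ∘ ⇑((Fin.revPerm).trans (Tuple.sort m)))
      = (m ∘ ⇑(Tuple.sort m)) ∘ (Fin.rev : Fin n → Fin n) := rfl
  rw [hcoe]
  exact h2.comp_strictAnti rev_strictAnti

lemma strictAnti_eq_of_comp {β γ : Fin n → ℕ} (hβ : StrictAnti β) (hγ : StrictAnti γ)
    (σ : Perm (Fin n)) (h : β ∘ ⇑σ = γ) : β = γ := by
  haveI : WellFoundedLT (Fin n) := Finite.to_wellFoundedLT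
  have hβ' : StrictMono (β ∘ (Fin.rev : Fin n → Fin n)) := hβ.comp rev_strictAnti
  have hγ' : StrictMono (γ ∘ (Fin.rev : Fin n → Fin n)) := hγ.comp rev_strictAnti
  have hrange : Set.range (β ∘ (Fin.rev : Fin n → Fin n))
      = Set.range (γ ∘ (Fin.rev : Fin n → Fin n)) := by
    rw [Fin.rev_surjective.range_comp, Fin.rev_surjective.range_comp, ← h,
      σ.surjective.range_comp]
  have heq := (hβ'.range_inj hγ').mp hrange
  funext i
  have := congrFun heq i.rev
  simpa using this

lemma strictAnti_ge {β : Fin n → ℕ} (hβ : StrictAnti β) :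
    ∀ i j : Fin n, (i : ℕ) ≤ (j : ℕ) → β j + ((j : ℕ) - (i : ℕ)) ≤ β i := by
  intro i j hij
  obtain ⟨d, hd⟩ : ∃ d, (j : ℕ) = (i : ℕ) + d := ⟨(j : ℕ) - (i : ℕ), by omega⟩
  clear hij
  induction d generalizing j with
  | zero =>
    have : j = i := Fin.ext (by omega)
    subst this; omega
  | succ d ih =>
    have hlt : (i : ℕ) + d < n := by have := j.isLt; omega
    set j' : Fin n := ⟨(i : ℕ) + d, hlt⟩ with hj'
    have hj'v : (j' : ℕ) = (i : ℕ) + d := rfl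
    have h1 : β j + 1 ≤ β j' := hβ (show j' < j by rw [Fin.lt_def, hj'v]; omega)
    have h2 := ih j' hj'v
    rw [hj'v] at h2
    omega

lemma strictAnti_add_delta {lam : Fin n → ℕ} (h : Antitone lam) :
    StrictAnti (fun i : Fin n => lam i + (n - 1 - (i : ℕ))) := by
  intro i j hij
  have h1 : lam j ≤ lam i := h hij.le
  have h2 : (i : ℕ) < (j : ℕ) := hij
  have h3 : (j : ℕ) < n := j.isLt
  show lam j + (n - 1 - (j : ℕ)) < lam i + (n - 1 - (i : ℕ))
  omega

/-- Abbreviation for `λ + δ`. -/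
def bet (lam : {lam : Fin n → ℕ // Antitone lam}) : Fin n → ℕ :=
  fun i => lam.1 i + (n - 1 - (i : ℕ))

lemma bet_strictAnti (lam : {lam : Fin n → ℕ // Antitone lam}) : StrictAnti (bet lam) :=
  strictAnti_add_delta lam.2

lemma bet_injective : Function.Injective (bet (n := n)) := by
  intro lam mu h
  refine Subtype.ext (funext fun i => ?_)
  have := congrFun h i
  simp only [bet] at this
  omega

lemma coeff_T (c : {lam : Fin n → ℕ // Antitone lam} →₀ ℤ) (d : Fin n →₀ ℕ)
    (lam : {lam : Fin n → ℕ // Antitone lam}) (τ : Perm (Fin n)) (hd : ⇑d = bet lam ∘ τ) :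
    coeff d (c.sum fun lam z => z • alternant n (bet lam))
      = (Perm.sign τ : ℤ) * c lam := by
  rw [Finsupp.sum, coeff_sum]
  have key : ∀ mu : {lam : Fin n → ℕ // Antitone lam},
      coeff d (c mu • alternant n (bet mu))
        = if mu = lam then (Perm.sign τ : ℤ) * c lam else 0 := by
    intro mu
    rw [coeff_smul, smul_eq_mul]
    split_ifs with hmu
    · subst hmu
      have hdm : d = Mon (bet mu ∘ τ) := by rw [← Mon_coe d, hd]
      rw [hdm, coeff_alternant_of_eq _ (bet_strictAnti mu).injective τ, mul_comm]
    · rw [coeff_alternant_of_ne, mul_zero]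
      intro σ hσ
      apply hmu
      apply bet_injective
      have : bet mu ∘ σ = bet lam ∘ τ := by rw [hσ, hd]
      have h2 : bet mu ∘ ⇑(σ * τ⁻¹) = bet lam := by
        funext i
        have := congrFun this (τ⁻¹ i)
        simpa using this
      exact strictAnti_eq_of_comp (bet_strictAnti mu) (bet_strictAnti lam) _ h2
  rw [Finset.sum_congr rfl fun mu _ => key mu]
  rcases eq_or_ne (c lam) 0 with h0 | h0
  · rw [h0, mul_zero]
    exact Finset.sum_eq_zero fun mu _ => by split_ifs with h <;> simp [h, h0]
  · rw [Finset.sum_ite_eq' c.support lam fun _ => (Perm.sign τ : ℤ) * c lam,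
      if_pos (Finsupp.mem_support_iff.mpr h0)]

lemma coeff_T_zero (c : {lam : Fin n → ℕ // Antitone lam} →₀ ℤ) (d : Fin n →₀ ℕ)
    (hd : ¬ Function.Injective ⇑d) :
    coeff d (c.sum fun lam z => z • alternant n (bet lam)) = 0 := by
  rw [Finsupp.sum, coeff_sum]
  refine Finset.sum_eq_zero fun mu _ => ?_
  rw [coeff_smul, coeff_alternant_of_ne, smul_zero]
  intro σ hσ
  apply hd
  rw [← hσ]
  exact (bet_strictAnti mu).injective.comp σ.injective

end AltAux

open MvPolynomial Equiv Finset AltAux in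
theorem alternant_properties_and_basis (n : ℕ) :
    (∀ α : Fin n → ℕ, (∃ j k, j ≠ k ∧ α j = α k) → alternant n α = 0) ∧
    (∀ (α : Fin n → ℕ) (σ : Equiv.Perm (Fin n)), StrictAnti (α ∘ σ) →
      alternant n α = (Equiv.Perm.sign σ : ℤ) • alternant n (α ∘ σ)) ∧
    (∀ p, IsAlternatingPoly n p →
      ∃! c : {lam : Fin n → ℕ // Antitone lam} →₀ ℤ,
        p = c.sum fun lam z =>
          z • alternant n (fun i => lam.1 i + (n - 1 - (i : ℕ)))) := by
  refine ⟨?_, ?_, ?_⟩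
  · rintro α ⟨j, k, hjk, he⟩
    exact Matrix.det_zero_of_column_eq hjk fun i => by simp [he]
  · intro α σ _
    have hsub : Matrix.of (fun i j : Fin n =>
        (MvPolynomial.X i : MvPolynomial (Fin n) ℤ) ^ (α ∘ σ) j)
        = (Matrix.of fun i j : Fin n =>
            (MvPolynomial.X i : MvPolynomial (Fin n) ℤ) ^ α j).submatrix id σ := rfl
    rw [alternant, alternant, hsub, Matrix.det_permute']
    rw [zsmul_eq_mul, ← mul_assoc]
    have h2 : ((Equiv.Perm.sign σ : ℤ) : MvPolynomial (Fin n) ℤ)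
        * ((Equiv.Perm.sign σ : ℤˣ) : MvPolynomial (Fin n) ℤ) = 1 := by
      rcases Int.units_eq_one_or (Equiv.Perm.sign σ) with h | h <;> simp [h]
    rw [h2, one_mul]
  · intro p hp
    set β : {lam : Fin n → ℕ // Antitone lam} → Fin n → ℕ := bet with hβ
    have hT : ∀ c : {lam : Fin n → ℕ // Antitone lam} →₀ ℤ,
        (c.sum fun lam z => z • alternant n (fun i => lam.1 i + (n - 1 - (i : ℕ))))
          = c.sum fun lam z => z • alternant n (bet lam) := fun c => rfl
    set F : {lam : Fin n → ℕ // Antitone lam} → ℤ := fun lam => coeff (Mon (bet lam)) p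
      with hF
    have hFfin : (Function.support F).Finite := by
      have hsub : Function.support F ⊆ (fun lam => Mon (bet lam)) ⁻¹' ↑p.support := by
        intro lam hlam
        simp only [Set.mem_preimage, Finset.coe_sort_coe, Finset.mem_coe,
          MvPolynomial.mem_support_iff]
        exact hlam
      exact Set.Finite.subset
        (Set.Finite.preimage ((Mon_injective.comp bet_injective).injOn)
          p.support.finite_toSet) hsub
    set c : {lam : Fin n → ℕ // Antitone lam} →₀ ℤ := Finsupp.ofSupportFinite F hFfin
      with hc
    have hcapp : ∀ lam, c lam = coeff (Mon (bet lam)) p := fun lam =>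
      congrFun (Finsupp.ofSupportFinite_coe) lam
    refine ⟨c, ?_, ?_⟩
    · -- existence
      show p = c.sum fun lam z => z • alternant n (bet lam)
      apply MvPolynomial.ext
      intro d
      by_cases hinj : Function.Injective ⇑d
      · obtain ⟨τ, hτ⟩ := exists_sort hinj
        -- decompose d ∘ τ = bet lam0
        have hge : ∀ i : Fin n, n - 1 - (i : ℕ) ≤ (⇑d ∘ τ) i := by
          intro i
          have hn : 0 < n := i.pos
          have := strictAnti_ge hτ i ⟨n - 1, by omega⟩ (by simp; omega)
          simp at this ⊢
          omega
        set lam0fn : Fin n → ℕ := fun i => (⇑d ∘ τ) i - (n - 1 - (i : ℕ)) with hlam0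
        have hanti : Antitone lam0fn := by
          intro i j hij
        -- lam0fn j ≤ lam0fn i
          have h1 := strictAnti_ge hτ i j (Fin.le_def.mp hij)
          have h2 : (j : ℕ) < n := j.isLt
          have h3 : (i : ℕ) ≤ (j : ℕ) := Fin.le_def.mp hij
          simp only [hlam0]
          omega
        set lam0 : {lam : Fin n → ℕ // Antitone lam} := ⟨lam0fn, hanti⟩ with hl0
        have hbet : bet lam0 = ⇑d ∘ τ := by
          funext i
          simp only [bet, hl0, hlam0]
          have := hge i
          omega
        have hd : ⇑d = bet lam0 ∘ ⇑(τ⁻¹ : Equiv.Perm (Fin n)) := by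
          rw [hbet]
          funext i
          simp
        rw [coeff_T c d lam0 τ⁻¹ hd, hcapp]
        have : d = Mon (bet lam0 ∘ ⇑(τ⁻¹ : Equiv.Perm (Fin n))) := by
          rw [← Mon_coe d, hd]
        rw [this, alt_coeff hp (bet lam0) τ⁻¹]
      · rw [coeff_T_zero c d hinj, ← Mon_coe d,
          coeff_zero_of_not_injective hp ⇑d hinj]
    · -- uniqueness
      intro c' hc'
      ext lam
      have hd : ⇑(Mon (bet lam)) = bet lam ∘ ⇑(1 : Equiv.Perm (Fin n)) := by
        rw [coe_Mon]; rfl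
      have := coeff_T c' (Mon (bet lam)) lam 1 hd
      rw [← hT, ← hc'] at this
      rw [hcapp]
      rw [this]
      simp
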